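/- Let H be a Hopf algebra with bijective antipode, A a right H-comodule transposed Poisson algebra, M a transposed Poisson (A,H)-Hopf module, and φ : H → A^A an H-colinear algebra map. If {1,aa'}·p_M(m) = φ(a'₍₁₎)⊳(a·p_M(a'₍₀₎·m)) holds for all a,a' ∈ A, m ∈ M, then M^{coH} ⊆ M^A, i.e. M^{coH} = M^{AcoH}. -/
import Mathlib


open TensorProduct

/-- A transposed Poisson algebra structure on a commutative unital `k`-algebra `A`:
a Lie bracket satisfying the transposed Leibniz rule `2a{b,c} = {ab,c} + {b,ac}`. -/
structure TPA (k A : Type*) [Field k] [CharZero k] [CommRing A] [Algebra k A] where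
  br : A →ₗ[k] A →ₗ[k] A
  skew : ∀ a b, br a b = - br b a
  jacobi : ∀ a b c, br a (br b c) = br (br a b) c + br b (br a c)
  leibniz : ∀ a b c, 2 * a * br b c = br (a * b) c + br b (a * c)

/-- The transposed Poisson center `A^A = {b | b{a,a'} = {ba,a'} for all a,a'}`. -/
def TPA.center {k A : Type*} [Field k] [CharZero k] [CommRing A] [Algebra k A]
    (P : TPA k A) : Set A := {b | ∀ a a', b * P.br a a' = P.br (b * a) a'}

/-- A transposed Poisson `A`-module: an `A`-module action `sm` and a Lie `A`-module
action `lact` satisfying `2{a,b}·m = a⊳(b·m) − b⊳(a·m)` and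
`2a·(b⊳m) = (ab)⊳m + b⊳(a·m)`. -/
structure TPMod (k A : Type*) [Field k] [CharZero k] [CommRing A] [Algebra k A]
    (P : TPA k A) (M : Type*) [AddCommGroup M] [Module k M] where
  sm : A →ₗ[k] M →ₗ[k] M
  lact : A →ₗ[k] M →ₗ[k] M
  sm_one : ∀ m, sm 1 m = m
  sm_mul : ∀ a b m, sm (a * b) m = sm a (sm b m)
  lact_br : ∀ a b m, lact (P.br a b) m = lact a (lact b m) - lact b (lact a m)
  compat1 : ∀ a b m, 2 • sm (P.br a b) m = lact a (sm b m) - lact b (sm a m)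
  compat2 : ∀ a b m, 2 • sm a (lact b m) = lact (a * b) m + lact b (sm a m)

/-- The projection `p_M(m) = φ(S⁻¹(m₁)) · m₀`, as the composite
`M → M ⊗ H → M` of the coaction with `m ⊗ h ↦ φ(S⁻¹(h)) · m`. -/
noncomputable def pMap {k H A M : Type*} [Field k] [CharZero k] [CommRing A]
    [Algebra k A] [Ring H] [HopfAlgebra k H] [AddCommGroup M] [Module k M]
    (sm : A →ₗ[k] M →ₗ[k] M) (φ : H →ₗ[k] A) (Sinv : H →ₗ[k] H)
    (ρM : M →ₗ[k] M ⊗[k] H) : M →ₗ[k] M :=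
  (TensorProduct.lift ((sm.comp (φ.comp Sinv)).flip)).comp ρM

theorem coinvariants_are_A_invariant {k A H : Type*} [Field k] [CharZero k]
    [CommRing A] [Algebra k A] [Ring H] [HopfAlgebra k H] (P : TPA k A)
    (ρA : A →ₗ[k] A ⊗[k] H)
    -- `ρA` is a comodule structure map on `A`
    (hAcoassoc : ∀ a : A,
      (TensorProduct.assoc k A H H) ((TensorProduct.map ρA LinearMap.id) (ρA a)) =
        (TensorProduct.map LinearMap.id (Coalgebra.comul (R := k))) (ρA a))
    (hAcounit : ∀ a : A,
      (TensorProduct.rid k A)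
        ((TensorProduct.map LinearMap.id (Coalgebra.counit (R := k))) (ρA a)) = a)
    -- `A` is an `H`-comodule algebra
    (hAone : ρA 1 = 1) (hAmul : ∀ a b : A, ρA (a * b) = ρA a * ρA b)
    -- compatibility of the coaction with the bracket: `ρ({a,a'}) = {a₀,a'₀} ⊗ a₁a'₁`
    (hAbr : ∀ a b : A, ρA (P.br a b) =
      TensorProduct.map₂ P.br (LinearMap.mul k H) (ρA a) (ρA b))
    {M : Type*} [AddCommGroup M] [Module k M] (Pm : TPMod k A P M)
    (ρM : M →ₗ[k] M ⊗[k] H)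
    -- `ρM` is a comodule structure map on `M`
    (hMcoassoc : ∀ m : M,
      (TensorProduct.assoc k M H H) ((TensorProduct.map ρM LinearMap.id) (ρM m)) =
        (TensorProduct.map LinearMap.id (Coalgebra.comul (R := k))) (ρM m))
    (hMcounit : ∀ m : M,
      (TensorProduct.rid k M)
        ((TensorProduct.map LinearMap.id (Coalgebra.counit (R := k))) (ρM m)) = m)
    -- `M` is an `(A,H)`-Hopf module: `ρ(a·m) = a₀·m₀ ⊗ a₁m₁`
    (hsmco : ∀ (a : A) (m : M), ρM (Pm.sm a m) =
      TensorProduct.map₂ Pm.sm (LinearMap.mul k H) (ρA a) (ρM m))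
    -- compatibility of the coaction with the Lie action: `ρ(a⊳m) = a₀⊳m₀ ⊗ a₁m₁`
    (hlactco : ∀ (a : A) (m : M), ρM (Pm.lact a m) =
      TensorProduct.map₂ Pm.lact (LinearMap.mul k H) (ρA a) (ρM m))
    -- the antipode is bijective with inverse `Sinv`
    (Sinv : H →ₗ[k] H)
    (hS1 : ∀ h : H, Sinv (HopfAlgebra.antipode (R := k) h) = h)
    (hS2 : ∀ h : H, HopfAlgebra.antipode (R := k) (Sinv h) = h)
    -- `φ : H → A^A` is an `H`-colinear algebra map
    (φ : H →ₗ[k] A) (hφc : ∀ h : H, φ h ∈ P.center)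
    (hφone : φ 1 = 1) (hφmul : ∀ h h' : H, φ (h * h') = φ h * φ h')
    (hφcolin : ∀ h : H, ρA (φ h) =
      TensorProduct.map φ LinearMap.id (Coalgebra.comul (R := k) h))
    -- hypothesis (3a): `{1,aa'}·p_M(m) = φ(a'₁) ⊳ (a · p_M(a'₀·m))`
    (h3a : ∀ (a a' : A) (m : M),
      Pm.sm (P.br 1 (a * a')) (pMap Pm.sm φ Sinv ρM m) =
      TensorProduct.lift (((Pm.lact.comp φ).flip).comp
        ((Pm.sm a).comp ((pMap Pm.sm φ Sinv ρM).comp (Pm.sm.flip m)))) (ρA a')) :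
    -- conclusion: `M^{coH} ⊆ M^A`, i.e. `M^{coH} = M^{AcoH}`
    ∀ m : M, ρM m = m ⊗ₜ[k] (1 : H) →
      ∀ a a' : A, Pm.sm (P.br a a') m = Pm.lact a (Pm.sm a' m) := by
  intro m hm a a'
  -- antipode 1 = 1
  have hanti1 : HopfAlgebra.antipode (R := k) (1 : H) = 1 := by
    have h := HopfAlgebra.mul_antipode_rTensor_comul_apply (R := k) (A := H) 1
    simpa [Algebra.TensorProduct.one_def] using h
  have hSinv1 : Sinv (1 : H) = 1 := by
    have := hS1 (1 : H); rwa [hanti1] at this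
  -- p_M m = m
  have hpm : pMap Pm.sm φ Sinv ρM m = m := by
    simp [pMap, hm, hSinv1, hφone, Pm.sm_one]
  -- Lemma 1 : {1,b}·m = 1 ⊳ (b·m)
  have hL1 : ∀ b : A, Pm.sm (P.br 1 b) m = Pm.lact 1 (Pm.sm b m) := by
    intro b
    have h := h3a b 1 m
    rw [mul_one, hpm, hAone, Algebra.TensorProduct.one_def] at h
    simpa [hφone, hpm, Pm.sm_one] using h
  -- Lemma 2 : {b,1}·m = b ⊳ m
  have hL2 : ∀ b : A, Pm.sm (P.br b 1) m = Pm.lact b m := by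
    intro b
    have hc := Pm.compat1 b 1 m
    rw [Pm.sm_one, ← hL1 b] at hc
    have hskew : P.br b 1 = - P.br 1 b := P.skew b 1
    rw [hskew, map_neg, LinearMap.neg_apply] at hc ⊢
    set x := Pm.sm (P.br 1 b) m with hx
    -- hc : 2 • (-x) = lact b m - x
    have h2 : Pm.lact b m - x = 2 • (-x) := hc.symm
    rw [sub_eq_iff_eq_add] at h2
    rw [h2, two_smul]; abel
  -- key bracket identity : {a,a'} = 2 a'{a,1} - {a'a,1}
  have hl := P.leibniz a' a 1
  rw [mul_one] at hl
  have key : P.br a a' = a' * P.br a 1 + a' * P.br a 1 - P.br (a' * a) 1 := by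
    linear_combination -hl
  calc Pm.sm (P.br a a') m
      = Pm.sm (a' * P.br a 1) m + Pm.sm (a' * P.br a 1) m
          - Pm.sm (P.br (a' * a) 1) m := by
        rw [key]; simp [map_add, map_sub]
    _ = 2 • Pm.sm a' (Pm.lact a m) - Pm.lact (a' * a) m := by
        rw [Pm.sm_mul, hL2 a, hL2 (a' * a), two_smul]
    _ = Pm.lact a (Pm.sm a' m) := by
        rw [Pm.compat2 a' a m]; abel
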